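/- Let q, d ≥ 2 be integers, let ψ be a nonzero integer, and let θ, x be integers. Then the density δ(q, d; 0, ψ, 0, θ, x) exists, and it equals gcd(ψ, θ, d)/d if gcd(ψ, θ, d) divides gcd(x, d), and equals 0 otherwise. In other words, the limit lim_{N→∞} (1/N)·|{n < N : ψ·w_q(n) + θ·n + x ≡ 0 (mod d)}| exists and equals gcd(ψ, θ, d)/d when gcd(ψ, θ, d) ∣ gcd(x, d), and 0 otherwise. -/

import Mathlib

open Filter

/-- `vq q n` is the `q`-adic valuation: `0` if `n = 0`, and otherwise the
largest `k` such that `q ^ k` divides `n`. -/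
noncomputable def vq (q n : ℕ) : ℕ := if n = 0 then 0 else sSup {k : ℕ | q ^ k ∣ n}

/-- `wq q n = ∑_{i=0}^n vq q i`. -/
noncomputable def wq (q n : ℕ) : ℕ := ∑ i ∈ Finset.range (n + 1), vq q i

section
open Complex

lemma vq_eq_maxPowDiv (q n : ℕ) (hq : 2 ≤ q) : vq q n = Nat.maxPowDiv q n := by
  rcases eq_or_ne n 0 with h | h
  · simp [vq, h, Nat.maxPowDiv]
  rw [vq, if_neg h]
  have hn : 0 < n := Nat.pos_of_ne_zero h
  apply le_antisymm
  · exact csSup_le ⟨0, by simp⟩ fun k hk => (Nat.pow_dvd_iff_le_padicValNat (show q ≠ 1 by omega) hn.ne').mp hk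
  · exact le_csSup ⟨Nat.maxPowDiv q n, fun k hk => (Nat.pow_dvd_iff_le_padicValNat (show q ≠ 1 by omega) hn.ne').mp hk⟩
      (Nat.maxPowDiv.pow_dvd : q ^ Nat.maxPowDiv q n ∣ n)

lemma vq_of_not_dvd {q n : ℕ} (hq : 2 ≤ q) (h : ¬ q ∣ n) : vq q n = 0 := by
  rw [vq_eq_maxPowDiv q n hq]
  by_contra h'
  exact h (dvd_trans (dvd_pow_self q h') (Nat.maxPowDiv.pow_dvd : q ^ Nat.maxPowDiv q n ∣ n))

lemma vq_mul {q n : ℕ} (hq : 2 ≤ q) (hn : 0 < n) : vq q (q * n) = vq q n + 1 := by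
  rw [vq_eq_maxPowDiv q _ hq, vq_eq_maxPowDiv q _ hq]; exact Nat.maxPowDiv.base_mul_eq_succ hq hn.ne'

lemma wq_zero (q : ℕ) : wq q 0 = 0 := by simp [wq, vq]

lemma wq_succ (q n : ℕ) : wq q (n + 1) = wq q n + vq q (n + 1) := by
  simp [wq, Finset.sum_range_succ]

lemma not_dvd_of_small {q m s : ℕ} (h0 : 0 < s) (hs : s < q) : ¬ q ∣ q * m + s := by
  intro h
  have : q ∣ s := (Nat.dvd_add_right ⟨m, rfl⟩).mp h
  exact absurd (Nat.le_of_dvd h0 this) (not_le.mpr hs)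

lemma wq_mul (q : ℕ) (hq : 2 ≤ q) (m : ℕ) : wq q (q * m) = m + wq q m := by
  induction m with
  | zero => simp [wq_zero]
  | succ m ih =>
    have key : wq q (q * (m + 1)) = wq q (q * m) + ∑ t ∈ Finset.range q, vq q (q * m + 1 + t) := by
      have : q * (m + 1) + 1 = (q * m + 1) + q := by rw [Nat.mul_succ]; omega
      rw [wq, this, Finset.sum_range_add, ← wq]
    have inner : ∑ t ∈ Finset.range q, vq q (q * m + 1 + t) = vq q (m + 1) + 1 := by
      rw [Finset.sum_eq_single (q - 1)]
      · have : q * m + 1 + (q - 1) = q * (m + 1) := by rw [Nat.mul_succ]; omega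
        rw [this, vq_mul hq (Nat.succ_pos m)]
      · intro t ht hne
        have ht' : t < q := Finset.mem_range.mp ht
        have : q * m + 1 + t = q * m + (1 + t) := by ring
        rw [this]
        exact vq_of_not_dvd hq (not_dvd_of_small (by omega) (by omega))
      · intro h
        exact absurd (Finset.mem_range.mpr (by omega)) h
    rw [key, inner, ih, wq_succ]
    ring

lemma wq_mul_add (q : ℕ) (hq : 2 ≤ q) (m r : ℕ) (hr : r < q) :
    wq q (q * m + r) = m + wq q m := by
  have key : wq q (q * m + r) = wq q (q * m) + ∑ t ∈ Finset.range r, vq q (q * m + 1 + t) := by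
    have : q * m + r + 1 = (q * m + 1) + r := by ring
    rw [wq, this, Finset.sum_range_add, ← wq]
  rw [key, wq_mul q hq m]
  have : ∑ t ∈ Finset.range r, vq q (q * m + 1 + t) = 0 := by
    apply Finset.sum_eq_zero
    intro t ht
    have ht' : t < r := Finset.mem_range.mp ht
    have : q * m + 1 + t = q * m + (1 + t) := by ring
    rw [this]
    exact vq_of_not_dvd hq (not_dvd_of_small (by omega) (by omega))
  rw [this, add_zero]

noncomputable def eF (d : ℕ) (t : ℤ) : ℂ :=
  Complex.exp ((2 * Real.pi * (t : ℝ) / (d : ℝ) : ℝ) * Complex.I)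

lemma eF_add (d : ℕ) (s t : ℤ) : eF d (s + t) = eF d s * eF d t := by
  rw [eF, eF, eF, ← Complex.exp_add]
  congr 1
  push_cast
  ring

lemma eF_norm (d : ℕ) (t : ℤ) : ‖eF d t‖ = 1 := Complex.norm_exp_ofReal_mul_I _

lemma eF_pow (d : ℕ) (t : ℤ) (n : ℕ) : eF d t ^ n = eF d (n * t) := by
  induction n with
  | zero => simp [eF]
  | succ n ih =>
    rw [pow_succ, ih, ← eF_add]
    congr 1
    push_cast
    ring

lemma eF_eq_one_iff {d : ℕ} (hd : 0 < d) (t : ℤ) : eF d t = 1 ↔ (d : ℤ) ∣ t := by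
  have hd' : (d : ℝ) ≠ 0 := by positivity
  rw [eF, Complex.exp_eq_one_iff]
  constructor
  · rintro ⟨n, hn⟩
    have hI : (Complex.I : ℂ) ≠ 0 := Complex.I_ne_zero
    rw [show (n : ℂ) * (2 * Real.pi * Complex.I) = (((n : ℝ) * (2 * Real.pi) : ℝ) : ℂ) * Complex.I
      by push_cast; ring] at hn
    have h2 := mul_right_cancel₀ hI hn
    have h3 : (2 * Real.pi * (t : ℝ) / (d : ℝ) : ℝ) = (n : ℝ) * (2 * Real.pi) :=
      Complex.ofReal_inj.mp h2
    have h4 : (2 * Real.pi) * (t : ℝ) = (2 * Real.pi) * ((n : ℝ) * (d : ℝ)) := by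
      field_simp at h3
      rw [h3]; ring
    have h5 : (t : ℝ) = (n : ℝ) * (d : ℝ) :=
      mul_left_cancel₀ (by positivity : (2 * Real.pi : ℝ) ≠ 0) h4
    have h6 : t = n * (d : ℤ) := by exact_mod_cast h5
    exact ⟨n, by rw [h6]; ring⟩
  · rintro ⟨k, rfl⟩
    refine ⟨k, ?_⟩
    have harg : (2 * Real.pi * (((d : ℤ) * k : ℤ) : ℝ) / (d : ℝ) : ℝ) = (k : ℝ) * (2 * Real.pi) := by
      push_cast
      field_simp
    rw [harg]
    push_cast
    ring

lemma eF_eq_one_of_dvd {d : ℕ} (hd : 0 < d) {t : ℤ} (h : (d : ℤ) ∣ t) : eF d t = 1 :=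
  (eF_eq_one_iff hd t).mpr h

lemma eF_eq_of_dvd_sub {d : ℕ} (hd : 0 < d) {s t : ℤ} (h : (d : ℤ) ∣ s - t) :
    eF d s = eF d t := by
  have : eF d s = eF d (t + (s - t)) := by norm_num
  rw [this, eF_add, eF_eq_one_of_dvd hd h, mul_one]

lemma eF_orth {d : ℕ} (hd : 0 < d) (t : ℤ) :
    ∑ a ∈ Finset.range d, eF d (a * t) = if (d : ℤ) ∣ t then (d : ℂ) else 0 := by
  by_cases h : (d : ℤ) ∣ t
  · rw [if_pos h]
    have h1 : ∑ a ∈ Finset.range d, eF d (a * t) = ∑ a ∈ Finset.range d, (1 : ℂ) :=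
      Finset.sum_congr rfl (fun a _ => eF_eq_one_of_dvd hd (Dvd.dvd.mul_left h a))
    rw [h1]
    simp
  · rw [if_neg h]
    have hz : eF d t ≠ 1 := fun hz => h ((eF_eq_one_iff hd t).mp hz)
    have h1 : ∑ a ∈ Finset.range d, eF d (a * t) = ∑ a ∈ Finset.range d, (eF d t) ^ a :=
      Finset.sum_congr rfl (fun a _ => (eF_pow d t a).symm)
    rw [h1, geom_sum_eq hz, eF_pow d t d, eF_eq_one_of_dvd hd ⟨t, rfl⟩, sub_self, zero_div]

lemma eF_div_mod {d g : ℕ} (hg : g ∣ d) (hg0 : 0 < g) (hd : 0 < d) (t : ℤ) :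
    eF d ((d / g : ℕ) * t) = eF g t := by
  have hd' : (d : ℝ) ≠ 0 := by positivity
  have hg' : (g : ℝ) ≠ 0 := by positivity
  have hcast : ((d / g : ℕ) : ℝ) = (d : ℝ) / (g : ℝ) := by
    rw [Nat.cast_div hg hg']
  have harg : (2 * Real.pi * ((((d / g : ℕ) : ℤ) * t : ℤ) : ℝ) / (d : ℝ) : ℝ)
      = (2 * Real.pi * (t : ℝ) / (g : ℝ) : ℝ) := by
    rw [Int.cast_mul, Int.cast_natCast, hcast]
    field_simp
  rw [eF, eF, harg]

lemma sum_range_mul_eq (q M : ℕ) (f : ℕ → ℂ) :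
    ∑ n ∈ Finset.range (q * M), f n = ∑ m ∈ Finset.range M, ∑ r ∈ Finset.range q, f (q * m + r) := by
  induction M with
  | zero => simp
  | succ M ih =>
    rw [Nat.mul_succ, Finset.sum_range_add, ih, Finset.sum_range_succ]

lemma abs_one_add_lt {z : ℂ} (hz : ‖z‖ = 1) (h1 : z ≠ 1) : ‖1 + z‖ < 2 := by
  have hre : z.re < 1 := by
    rcases lt_or_eq_of_le (Complex.re_le_norm z) with h | h
    · calc z.re < ‖z‖ := h
        _ = 1 := by rw [hz]
    · exfalso
      apply h1
      have habs : ‖z‖ = 1 := by rw [hz]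
      have hre1 : z.re = 1 := by rw [h, habs]
      have him : z.im = 0 := by
        have h2 : Complex.normSq z = 1 := by
          rw [← Complex.sq_norm, habs]; norm_num
        have := Complex.normSq_apply z
        nlinarith [this, h2, hre1]
      exact Complex.ext hre1 him
  have hns : Complex.normSq (1 + z) < 4 := by
    rw [Complex.normSq_add]
    have h2 : Complex.normSq (1 : ℂ) = 1 := by simp
    have h3 : Complex.normSq z = 1 := by
      rw [← Complex.sq_norm, hz]; norm_num
    have h4 : ((1 : ℂ) * (starRingEnd ℂ) z).re = z.re := by simp
    rw [h2, h3, h4]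
    linarith
  have h5 : ‖1 + z‖ ^ 2 < 2 ^ 2 := by
    rw [← Complex.sq_norm (1 + z)] at hns
    nlinarith [hns]
  have h6 : (0 : ℝ) ≤ 2 := by norm_num
  exact lt_of_pow_lt_pow_left₀ 2 h6 h5

noncomputable def Gq (q d : ℕ) (β : ℤ) : ℂ := ∑ r ∈ Finset.range q, eF d (β * r)

lemma Gq_norm_le (q d : ℕ) (β : ℤ) : ‖Gq q d β‖ ≤ q := by
  calc ‖Gq q d β‖ ≤ ∑ r ∈ Finset.range q, ‖eF d (β * r)‖ := norm_sum_le _ _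
    _ = ∑ r ∈ Finset.range q, (1 : ℝ) := by
        refine Finset.sum_congr rfl fun r _ => eF_norm d _
    _ = q := by simp

lemma Gq_mod (q d : ℕ) (hd : 0 < d) (β : ℤ) : Gq q d β = Gq q d (β % d) := by
  refine Finset.sum_congr rfl fun r _ => ?_
  apply eF_eq_of_dvd_sub hd
  have h1 : β * r - (β % d) * r = (β - β % d) * r := by ring
  have h2 : (d : ℤ) ∣ β - β % d := ⟨β / d, by have := Int.mul_ediv_add_emod β d; linarith⟩
  rw [h1]
  exact h2.mul_right r

lemma Gq_norm_lt (q d : ℕ) (hq : 2 ≤ q) (hd : 0 < d) {β : ℤ} (hβ : ¬ (d : ℤ) ∣ β) :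
    ‖Gq q d β‖ < q := by
  set z := eF d β with hzdef
  have hz1 : z ≠ 1 := fun h => hβ ((eF_eq_one_iff hd β).mp h)
  have hzn : ‖z‖ = 1 := eF_norm d β
  have hsum : Gq q d β = ∑ r ∈ Finset.range q, z ^ r := by
    refine Finset.sum_congr rfl fun r _ => ?_
    rw [eF_pow, mul_comm]
  have hq2 : q = 2 + (q - 2) := by omega
  have hsplit : ∑ r ∈ Finset.range q, z ^ r
      = (∑ r ∈ Finset.range 2, z ^ r) + ∑ i ∈ Finset.range (q - 2), z ^ (2 + i) := by
    have h := Finset.sum_range_add (fun r => z ^ r) 2 (q - 2)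
    rwa [← hq2] at h
  have h2 : ∑ r ∈ Finset.range 2, z ^ r = 1 + z := by
    rw [Finset.sum_range_succ, Finset.sum_range_one]; norm_num
  have htail : ‖∑ i ∈ Finset.range (q - 2), z ^ (2 + i)‖ ≤ (q - 2 : ℝ) := by
    calc ‖∑ i ∈ Finset.range (q - 2), z ^ (2 + i)‖
        ≤ ∑ i ∈ Finset.range (q - 2), ‖z ^ (2 + i)‖ := norm_sum_le _ _
      _ = ∑ i ∈ Finset.range (q - 2), (1 : ℝ) := by
          refine Finset.sum_congr rfl fun i _ => ?_
          rw [norm_pow, hzn, one_pow]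
      _ = ((q - 2 : ℕ) : ℝ) := by simp
      _ = (q - 2 : ℝ) := by
          have : (2 : ℕ) ≤ q := hq
          push_cast [Nat.cast_sub this]
          ring
  calc ‖Gq q d β‖ = ‖(1 + z) + ∑ i ∈ Finset.range (q - 2), z ^ (2 + i)‖ := by
        rw [hsum, hsplit, h2]
    _ ≤ ‖1 + z‖ + ‖∑ i ∈ Finset.range (q - 2), z ^ (2 + i)‖ := norm_add_le _ _
    _ ≤ ‖1 + z‖ + (q - 2 : ℝ) := by linarith [htail]
    _ < 2 + (q - 2 : ℝ) := by linarith [abs_one_add_lt hzn hz1]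
    _ = q := by ring

noncomputable def rho (q d : ℕ) : ℝ :=
  (insert (0 : ℝ) ((((Finset.range d).filter (fun b : ℕ => ¬ (d : ℤ) ∣ (b : ℤ))).image
    (fun b : ℕ => ‖Gq q d (b : ℤ)‖)) : Finset ℝ)).max' (by simp)

lemma rho_nonneg (q d : ℕ) : 0 ≤ rho q d :=
  Finset.le_max' _ _ (Finset.mem_insert_self _ _)

lemma rho_lt (q d : ℕ) (hq : 2 ≤ q) (hd : 0 < d) : rho q d < q := by
  apply Finset.max'_lt_iff _ _ |>.mpr
  intro y hy
  rcases Finset.mem_insert.mp hy with h | h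
  · subst h; positivity
  · obtain ⟨b, hb, rfl⟩ := Finset.mem_image.mp h
    obtain ⟨-, hb2⟩ := Finset.mem_filter.mp hb
    exact Gq_norm_lt q d hq hd hb2

lemma Gq_le_rho (q d : ℕ) (hd : 0 < d) {β : ℤ} (hβ : ¬ (d : ℤ) ∣ β) :
    ‖Gq q d β‖ ≤ rho q d := by
  rw [Gq_mod q d hd β]
  have hnn : 0 ≤ β % d := Int.emod_nonneg β (by positivity)
  have hlt : β % d < d := Int.emod_lt_of_pos β (by exact_mod_cast hd)
  have hβ' : ¬ (d : ℤ) ∣ (β % d) := by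
    intro hdvd
    apply hβ
    have h2 : (d : ℤ) ∣ β - β % d := ⟨β / d, by have := Int.mul_ediv_add_emod β d; linarith⟩
    have h3 := dvd_add h2 hdvd
    simpa using h3
  set b := (β % d).toNat with hbdef
  have hcast : ((b : ℕ) : ℤ) = β % d := Int.toNat_of_nonneg hnn
  have hmem : b ∈ (Finset.range d).filter (fun b : ℕ => ¬ (d : ℤ) ∣ (b : ℤ)) := by
    refine Finset.mem_filter.mpr ⟨Finset.mem_range.mpr ?_, ?_⟩
    · have : ((b : ℕ) : ℤ) < (d : ℤ) := by rw [hcast]; exact hlt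
      exact_mod_cast this
    · rw [hcast]; exact hβ'
  have : ‖Gq q d ((b : ℕ) : ℤ)‖ ≤ rho q d := by
    unfold rho
    apply Finset.le_max'
    exact Finset.mem_insert_of_mem (Finset.mem_image_of_mem _ hmem)
  rwa [hcast] at this

noncomputable def Sq (q d : ℕ) (α β : ℤ) (N : ℕ) : ℂ :=
  ∑ n ∈ Finset.range N, eF d (α * (wq q n : ℤ) + β * (n : ℤ))

lemma Sq_norm_le (q d : ℕ) (α β : ℤ) (N : ℕ) : ‖Sq q d α β N‖ ≤ N := by
  calc ‖Sq q d α β N‖ ≤ ∑ n ∈ Finset.range N, ‖eF d (α * (wq q n : ℤ) + β * (n : ℤ))‖ :=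
        norm_sum_le _ _
    _ = ∑ n ∈ Finset.range N, (1 : ℝ) := Finset.sum_congr rfl fun n _ => eF_norm d _
    _ = N := by simp

lemma Sq_step (q d : ℕ) (hq : 2 ≤ q) (hd : 0 < d) (α β : ℤ) (N : ℕ) :
    ‖Sq q d α β N‖ ≤ ‖Gq q d β‖ * ‖Sq q d α (α + q * β) (N / q)‖ + q := by
  set M := N / q with hM
  have hN : N = q * M + N % q := by rw [hM, Nat.div_add_mod]
  have hsplit : Sq q d α β N
      = (∑ n ∈ Finset.range (q * M), eF d (α * (wq q n : ℤ) + β * (n : ℤ)))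
      + ∑ i ∈ Finset.range (N % q),
          eF d (α * (wq q (q * M + i) : ℤ) + β * ((q * M + i : ℕ) : ℤ)) := by
    rw [Sq]
    conv_lhs => rw [hN]
    rw [Finset.sum_range_add]
  have hmain : ∑ n ∈ Finset.range (q * M), eF d (α * (wq q n : ℤ) + β * (n : ℤ))
      = Gq q d β * Sq q d α (α + q * β) M := by
    rw [sum_range_mul_eq]
    have hterm : ∀ m ∈ Finset.range M, ∀ r ∈ Finset.range q,
        eF d (α * (wq q (q * m + r) : ℤ) + β * ((q * m + r : ℕ) : ℤ))
        = eF d (β * r) * eF d (α * (wq q m : ℤ) + (α + q * β) * (m : ℤ)) := by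
      intro m _ r hr
      rw [wq_mul_add q hq m r (Finset.mem_range.mp hr), ← eF_add]
      congr 1
      push_cast
      ring
    calc ∑ m ∈ Finset.range M, ∑ r ∈ Finset.range q,
          eF d (α * (wq q (q * m + r) : ℤ) + β * ((q * m + r : ℕ) : ℤ))
        = ∑ m ∈ Finset.range M, ∑ r ∈ Finset.range q,
          eF d (β * r) * eF d (α * (wq q m : ℤ) + (α + q * β) * (m : ℤ)) := by
          refine Finset.sum_congr rfl fun m hm => Finset.sum_congr rfl fun r hr => ?_
          exact hterm m hm r hr
      _ = ∑ m ∈ Finset.range M,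
            Gq q d β * eF d (α * (wq q m : ℤ) + (α + q * β) * (m : ℤ)) := by
          refine Finset.sum_congr rfl fun m _ => ?_
          rw [← Finset.sum_mul]
          rfl
      _ = Gq q d β * Sq q d α (α + q * β) M := by
          rw [← Finset.mul_sum, Sq]
  have htail : ‖∑ i ∈ Finset.range (N % q),
      eF d (α * (wq q (q * M + i) : ℤ) + β * ((q * M + i : ℕ) : ℤ))‖ ≤ q := by
    calc ‖∑ i ∈ Finset.range (N % q), eF d (α * (wq q (q * M + i) : ℤ) + β * ((q * M + i : ℕ) : ℤ))‖
        ≤ ∑ i ∈ Finset.range (N % q), (1 : ℝ) := by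
          refine le_trans (norm_sum_le _ _) ?_
          refine le_of_eq (Finset.sum_congr rfl fun i _ => eF_norm d _)
      _ = (N % q : ℕ) := by simp
      _ ≤ q := by
          have := Nat.mod_lt N (show 0 < q by omega)
          exact_mod_cast Nat.le_of_lt this
  calc ‖Sq q d α β N‖ ≤ ‖Gq q d β * Sq q d α (α + q * β) M‖ + q := by
        rw [hsplit, hmain]
        refine le_trans (norm_add_le _ _) ?_
        linarith [htail]
    _ = ‖Gq q d β‖ * ‖Sq q d α (α + q * β) M‖ + q := by rw [norm_mul]

lemma Sq_step2 (q d : ℕ) (hq : 2 ≤ q) (hd : 0 < d) (α β : ℤ) (N : ℕ)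
    (hα : ¬ (d : ℤ) ∣ α) :
    ‖Sq q d α β N‖ ≤ (q * rho q d) * ‖Sq q d α (α + q * (α + q * β)) (N / q / q)‖
      + (q * q + q) := by
  have h1 := Sq_step q d hq hd α β N
  have h2 := Sq_step q d hq hd α (α + q * β) (N / q)
  set A := ‖Gq q d β‖
  set B := ‖Gq q d (α + q * β)‖
  set S2 := ‖Sq q d α (α + q * (α + q * β)) (N / q / q)‖
  have hA0 : 0 ≤ A := norm_nonneg _
  have hB0 : 0 ≤ B := norm_nonneg _
  have hS20 : 0 ≤ S2 := norm_nonneg _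
  have hq0 : (0 : ℝ) < q := by positivity
  have hρ0 : 0 ≤ rho q d := rho_nonneg q d
  have hρq : rho q d < q := rho_lt q d hq hd
  have hAq : A ≤ q := Gq_norm_le q d β
  have hAB : A * B ≤ q * rho q d := by
    by_cases hb : (d : ℤ) ∣ β
    · have hβ1 : ¬ (d : ℤ) ∣ (α + q * β) := by
        intro h
        apply hα
        have h3 : (d : ℤ) ∣ (q : ℤ) * β := hb.mul_left q
        have := dvd_sub h h3
        simpa using this
      have hB' : B ≤ rho q d := Gq_le_rho q d hd hβ1
      nlinarith
    · have hA' : A ≤ rho q d := Gq_le_rho q d hd hb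
      have hB' : B ≤ q := Gq_norm_le q d _
      nlinarith
  calc ‖Sq q d α β N‖ ≤ A * ‖Sq q d α (α + q * β) (N / q)‖ + q := h1
    _ ≤ A * (B * S2 + q) + q := by
        refine add_le_add ?_ le_rfl
        exact mul_le_mul_of_nonneg_left h2 hA0
    _ = (A * B) * S2 + A * q + q := by ring
    _ ≤ (q * rho q d) * S2 + q * q + q := by
        have := mul_le_mul_of_nonneg_right hAB hS20
        nlinarith
    _ = (q * rho q d) * S2 + (q * q + q) := by ring

lemma Sq_bound (q d : ℕ) (hq : 2 ≤ q) (hd : 0 < d) (α : ℤ) (hα : ¬ (d : ℤ) ∣ α) (j : ℕ) :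
    ∃ C : ℝ, 0 ≤ C ∧ ∀ β : ℤ, ∀ N : ℕ,
      ‖Sq q d α β N‖ ≤ (rho q d / q) ^ j * N + C := by
  induction j with
  | zero => exact ⟨0, le_refl 0, fun β N => by simpa using Sq_norm_le q d α β N⟩
  | succ j ih =>
    obtain ⟨C, hC0, hC⟩ := ih
    have hq0 : (0 : ℝ) < q := by positivity
    have hqne : (q : ℝ) ≠ 0 := ne_of_gt hq0
    have hρ0 : 0 ≤ rho q d := rho_nonneg q d
    have hρq : rho q d < q := rho_lt q d hq hd
    have hσ0 : 0 ≤ rho q d / q := by positivity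
    have hσj : (0 : ℝ) ≤ (rho q d / q) ^ j := by positivity
    refine ⟨q * q * C + (q * q + q), by positivity, fun β N => ?_⟩
    have h1 := Sq_step2 q d hq hd α β N hα
    set X : ℝ := ((N / q / q : ℕ) : ℝ) with hX
    have hX0 : 0 ≤ X := by positivity
    have h2 := hC (α + q * (α + q * β)) (N / q / q)
    have h3 : (q : ℝ) * q * X ≤ N := by
      have hnat : (N / q / q) * (q * q) ≤ N := by
        rw [Nat.div_div_eq_div_mul]
        exact Nat.div_mul_le_self N (q * q)
      have := (Nat.cast_le (α := ℝ)).mpr hnat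
      push_cast at this
      linarith
    have key1 : (q * rho q d) * ‖Sq q d α (α + q * (α + q * β)) (N / q / q)‖
        ≤ (q * rho q d) * ((rho q d / q) ^ j * X + C) := by
      apply mul_le_mul_of_nonneg_left h2 (by positivity)
    have e1 : (q * rho q d) * ((rho q d / q) ^ j * X + C)
        = (rho q d / q) ^ j * (rho q d / q) * (q * q * X) + q * rho q d * C := by
      field_simp
    have key2 : (rho q d / q) ^ j * (rho q d / q) * (q * q * X)
        ≤ (rho q d / q) ^ j * (rho q d / q) * N := by
      apply mul_le_mul_of_nonneg_left h3 (by positivity)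
    have key3 : (q:ℝ) * rho q d * C ≤ q * q * C :=
      mul_le_mul_of_nonneg_right (by nlinarith) hC0
    have hpow : (rho q d / q) ^ (j + 1) = (rho q d / q) ^ j * (rho q d / q) := pow_succ _ _
    rw [hpow]
    linarith

lemma Sq_tendsto_hard (q d : ℕ) (hq : 2 ≤ q) (hd : 0 < d) (α β : ℤ) (hα : ¬ (d : ℤ) ∣ α) :
    Tendsto (fun N : ℕ => Sq q d α β N / (N : ℂ)) atTop (nhds 0) := by
  rw [tendsto_zero_iff_norm_tendsto_zero]
  have hnorm : ∀ N : ℕ, ‖Sq q d α β N / (N : ℂ)‖ = ‖Sq q d α β N‖ / N := by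
    intro N
    rw [norm_div]
    congr 1
    simp
  rw [Metric.tendsto_atTop]
  intro ε hε
  have hq0 : (0 : ℝ) < q := by exact_mod_cast (show 0 < q by omega)
  have hσ0 : 0 ≤ rho q d / q := div_nonneg (rho_nonneg q d) hq0.le
  have hσ1 : rho q d / q < 1 := (div_lt_one hq0).mpr (rho_lt q d hq hd)
  obtain ⟨j, hj⟩ := exists_pow_lt_of_lt_one (half_pos hε) hσ1
  obtain ⟨C, hC0, hC⟩ := Sq_bound q d hq hd α hα j
  refine ⟨⌊2 * C / ε⌋₊ + 1, fun n hn => ?_⟩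
  have hn1 : 1 ≤ n := le_trans (by omega) hn
  have hn0 : (0 : ℝ) < n := by exact_mod_cast hn1
  have h5 : 2 * C / ε < n := by
    calc 2 * C / ε < (⌊2 * C / ε⌋₊ : ℝ) + 1 := Nat.lt_floor_add_one _
      _ ≤ n := by exact_mod_cast hn
  have h6 : 2 * C < ε * n := by
    rw [div_lt_iff₀ hε] at h5
    linarith
  have h7 : C / n < ε / 2 := by
    rw [div_lt_iff₀ hn0]
    linarith
  rw [Real.dist_eq, sub_zero, _root_.abs_of_nonneg (norm_nonneg _), hnorm]
  calc ‖Sq q d α β n‖ / n ≤ ((rho q d / q) ^ j * n + C) / n := by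
        gcongr
        exact hC β n
    _ = (rho q d / q) ^ j + C / n := by
        rw [add_div, mul_div_assoc, div_self (ne_of_gt hn0), mul_one]
    _ < ε / 2 + ε / 2 := by linarith [hj]
    _ = ε := by ring

lemma Sq_tendsto_geom (q d : ℕ) (hq : 2 ≤ q) (hd : 0 < d) (α β : ℤ)
    (hα : (d : ℤ) ∣ α) (hβ : ¬ (d : ℤ) ∣ β) :
    Tendsto (fun N : ℕ => Sq q d α β N / (N : ℂ)) atTop (nhds 0) := by
  set z := eF d β with hz
  have hz1 : z ≠ 1 := fun h => hβ ((eF_eq_one_iff hd β).mp h)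
  have hzn : ‖z‖ = 1 := eF_norm d β
  have hzsub : (0 : ℝ) < ‖z - 1‖ := by
    rw [norm_pos_iff]
    exact sub_ne_zero.mpr hz1
  set K : ℝ := 2 / ‖z - 1‖ with hK
  have hK0 : 0 ≤ K := by positivity
  have hSgeom : ∀ N : ℕ, Sq q d α β N = ∑ n ∈ Finset.range N, z ^ n := by
    intro N
    refine Finset.sum_congr rfl fun n _ => ?_
    rw [eF_add, eF_eq_one_of_dvd hd (hα.mul_right _), one_mul, eF_pow, mul_comm]
  have hbound : ∀ N : ℕ, ‖Sq q d α β N‖ ≤ K := by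
    intro N
    rw [hSgeom, geom_sum_eq hz1, norm_div, hK]
    gcongr
    calc ‖z ^ N - 1‖ ≤ ‖z ^ N‖ + ‖(1 : ℂ)‖ := norm_sub_le _ _
      _ = 2 := by rw [norm_pow, hzn]; norm_num
  rw [tendsto_zero_iff_norm_tendsto_zero]
  apply squeeze_zero (fun N => norm_nonneg _) (g := fun N : ℕ => K / N)
  · intro N
    rw [norm_div]
    rcases Nat.eq_zero_or_pos N with h | h
    · subst h; simp
    · have hN0 : (0 : ℝ) < N := by exact_mod_cast h
      have : ‖(N : ℂ)‖ = (N : ℝ) := by simp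
      rw [this]
      gcongr
      exact hbound N
  · exact tendsto_const_div_atTop_nhds_zero_nat K

lemma Sq_tendsto_zero' (q d : ℕ) (hq : 2 ≤ q) (hd : 0 < d) (α β : ℤ)
    (h : ¬ ((d : ℤ) ∣ α ∧ (d : ℤ) ∣ β)) :
    Tendsto (fun N : ℕ => Sq q d α β N / (N : ℂ)) atTop (nhds 0) := by
  by_cases hα : (d : ℤ) ∣ α
  · exact Sq_tendsto_geom q d (by omega) hd α β hα (fun hβ => h ⟨hα, hβ⟩)
  · exact Sq_tendsto_hard q d hq hd α β hα

lemma Sq_tendsto_one (q d : ℕ) (hd : 0 < d) (α β : ℤ)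
    (h : (d : ℤ) ∣ α ∧ (d : ℤ) ∣ β) :
    Tendsto (fun N : ℕ => Sq q d α β N / (N : ℂ)) atTop (nhds 1) := by
  have hS : ∀ N : ℕ, Sq q d α β N = (N : ℂ) := by
    intro N
    rw [Sq]
    have : ∀ n ∈ Finset.range N, eF d (α * (wq q n : ℤ) + β * (n : ℤ)) = 1 := fun n _ =>
      eF_eq_one_of_dvd hd (dvd_add (h.1.mul_right _) (h.2.mul_right _))
    rw [Finset.sum_congr rfl this]
    simp
  have hev : (fun N : ℕ => Sq q d α β N / (N : ℂ)) =ᶠ[atTop] (fun _ => (1 : ℂ)) := by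
    filter_upwards [eventually_ge_atTop 1] with N hN
    rw [hS N, div_self (Nat.cast_ne_zero.mpr (by omega))]
  exact Tendsto.congr' hev.symm tendsto_const_nhds

lemma count_eq (q d : ℕ) (hd : 0 < d) (ψ θ x : ℤ) (N : ℕ) :
    (d : ℂ) * (((Finset.range N).filter fun n =>
        (ψ * wq q n + θ * n + x) % (d : ℤ) = 0).card : ℂ)
      = ∑ a ∈ Finset.range d, eF d (a * x) * Sq q d (a * ψ) (a * θ) N := by
  symm
  have hterm : ∀ a : ℕ, ∀ n : ℕ,
      eF d (a * x) * eF d ((a * ψ) * (wq q n : ℤ) + (a * θ) * (n : ℤ))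
      = eF d ((a : ℤ) * (ψ * wq q n + θ * n + x)) := by
    intro a n
    rw [← eF_add]
    congr 1
    ring
  calc ∑ a ∈ Finset.range d, eF d (a * x) * Sq q d (a * ψ) (a * θ) N
      = ∑ a ∈ Finset.range d, ∑ n ∈ Finset.range N,
          eF d ((a : ℤ) * (ψ * wq q n + θ * n + x)) := by
        refine Finset.sum_congr rfl fun a _ => ?_
        rw [Sq, Finset.mul_sum]
        exact Finset.sum_congr rfl fun n _ => hterm a n
    _ = ∑ n ∈ Finset.range N, ∑ a ∈ Finset.range d,
          eF d ((a : ℤ) * (ψ * wq q n + θ * n + x)) := Finset.sum_comm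
    _ = ∑ n ∈ Finset.range N,
          (if (d : ℤ) ∣ (ψ * wq q n + θ * n + x) then (d : ℂ) else 0) :=
        Finset.sum_congr rfl fun n _ => eF_orth hd _
    _ = ∑ n ∈ (Finset.range N).filter
          (fun n => (ψ * wq q n + θ * n + x) % (d : ℤ) = 0), (d : ℂ) := by
        rw [Finset.sum_filter]
        refine Finset.sum_congr rfl fun n _ => ?_
        congr 1
        exact propext ⟨fun h => Int.emod_eq_zero_of_dvd h, fun h => Int.dvd_of_emod_eq_zero h⟩
    _ = (d : ℂ) * (((Finset.range N).filter fun n =>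
          (ψ * wq q n + θ * n + x) % (d : ℤ) = 0).card : ℂ) := by
        rw [Finset.sum_const, nsmul_eq_mul, mul_comm]

lemma const_eval (d : ℕ) (hd : 2 ≤ d) (ψ θ x : ℤ) (hψ : ψ ≠ 0) :
    (1 / (d : ℂ)) * ∑ a ∈ Finset.range d,
        eF d (a * x) * (if ((d : ℤ) ∣ (a : ℤ) * ψ ∧ (d : ℤ) ∣ (a : ℤ) * θ) then (1 : ℂ) else 0)
      = ((if Int.gcd ψ (Int.gcd θ (d : ℤ)) ∣ Int.gcd x (d : ℤ) then
          (Int.gcd ψ (Int.gcd θ (d : ℤ)) : ℝ) / d else 0 : ℝ) : ℂ) := by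
  classical
  set g : ℕ := Int.gcd ψ (Int.gcd θ (d : ℤ)) with hgdef
  have hd0 : 0 < d := by omega
  have hg0 : 0 < g := by
    rw [hgdef]
    exact Int.gcd_pos_iff.mpr (Or.inl hψ)
  have hgθd : ((Int.gcd θ (d : ℤ) : ℕ) : ℤ) ∣ (d : ℤ) := Int.gcd_dvd_right _ _
  have hggθd : (g : ℤ) ∣ ((Int.gcd θ (d : ℤ) : ℕ) : ℤ) := Int.gcd_dvd_right _ _
  have hgd : g ∣ d := by
    have : (g : ℤ) ∣ (d : ℤ) := dvd_trans hggθd hgθd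
    exact_mod_cast this
  have hgψ : (g : ℤ) ∣ ψ := Int.gcd_dvd_left _ _
  have hgθ : (g : ℤ) ∣ θ := dvd_trans hggθd (Int.gcd_dvd_left _ _)
  have hdg0 : 0 < d / g := Nat.div_pos (Nat.le_of_dvd hd0 hgd) hg0
  have hdgg : (d / g) * g = d := Nat.div_mul_cancel hgd
  -- characterize the condition
  have hcond : ∀ a : ℕ, (((d : ℤ) ∣ (a : ℤ) * ψ ∧ (d : ℤ) ∣ (a : ℤ) * θ)) ↔ (d / g) ∣ a := by
    intro a
    constructor
    · rintro ⟨h1, h2⟩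
      have h3 : (d : ℤ) ∣ (a : ℤ) * (d : ℤ) := ⟨a, mul_comm _ _⟩
      have h4 : (d : ℤ) ∣ ((Int.gcd ((a : ℤ) * ψ) (Int.gcd ((a : ℤ) * θ) ((a : ℤ) * d)) : ℕ) : ℤ) :=
        Int.dvd_coe_gcd h1 (Int.dvd_coe_gcd h2 h3)
      have h5 : Int.gcd ((a : ℤ) * θ) ((a : ℤ) * d) = a * Int.gcd θ (d : ℤ) := by
        rw [Int.gcd_mul_left]
        simp
      have h6 : Int.gcd ((a : ℤ) * ψ) (Int.gcd ((a : ℤ) * θ) ((a : ℤ) * d)) = a * g := by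
        rw [h5, hgdef]
        push_cast
        rw [Int.gcd_mul_left]
        simp
      rw [h6] at h4
      have h7 : d ∣ a * g := by exact_mod_cast h4
      have h8 : (d / g) * g ∣ a * g := by rwa [hdgg]
      exact (Nat.mul_dvd_mul_iff_right hg0).mp h8
    · rintro ⟨j, rfl⟩
      constructor
      · obtain ⟨c, hc⟩ := hgψ
        refine ⟨j * c, ?_⟩
        rw [Nat.cast_mul, hc,
          show ((d : ℤ)) = ((d / g : ℕ) : ℤ) * (g : ℤ) by exact_mod_cast hdgg.symm]
        ring
      · obtain ⟨c, hc⟩ := hgθ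
        refine ⟨j * c, ?_⟩
        rw [Nat.cast_mul, hc,
          show ((d : ℤ)) = ((d / g : ℕ) : ℤ) * (g : ℤ) by exact_mod_cast hdgg.symm]
        ring
  have hsum1 : ∑ a ∈ Finset.range d,
      eF d (a * x) * (if ((d : ℤ) ∣ (a : ℤ) * ψ ∧ (d : ℤ) ∣ (a : ℤ) * θ) then (1 : ℂ) else 0)
      = ∑ a ∈ (Finset.range d).filter (fun a => (d / g) ∣ a), eF d (a * x) := by
    rw [Finset.sum_filter]
    refine Finset.sum_congr rfl fun a _ => ?_
    by_cases h : (d / g) ∣ a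
    · rw [if_pos h, if_pos ((hcond a).mpr h), mul_one]
    · rw [if_neg h, if_neg (fun hc => h ((hcond a).mp hc)), mul_zero]
  have hset : (Finset.range d).filter (fun a => (d / g) ∣ a)
      = (Finset.range g).image (fun j => (d / g) * j) := by
    ext a
    simp only [Finset.mem_filter, Finset.mem_range, Finset.mem_image]
    constructor
    · rintro ⟨hlt, j, rfl⟩
      refine ⟨j, ?_, rfl⟩
      by_contra hjg
      push_neg at hjg
      have : (d / g) * g ≤ (d / g) * j := Nat.mul_le_mul_left _ hjg
      omega
    · rintro ⟨j, hj, rfl⟩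
      refine ⟨?_, ⟨j, rfl⟩⟩
      calc (d / g) * j < (d / g) * g := by
            exact mul_lt_mul_of_pos_left hj hdg0
        _ = d := hdgg
  have hsum2 : ∑ a ∈ (Finset.range d).filter (fun a => (d / g) ∣ a), eF d (a * x)
      = ∑ j ∈ Finset.range g, eF g (j * x) := by
    rw [hset, Finset.sum_image (fun j₁ _ j₂ _ h => Nat.eq_of_mul_eq_mul_left hdg0 h)]
    refine Finset.sum_congr rfl fun j _ => ?_
    have harg : (((d / g) * j : ℕ) : ℤ) * x = ((d / g : ℕ) : ℤ) * ((j : ℤ) * x) := by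
      push_cast
      ring
    rw [harg, eF_div_mod hgd hg0 hd0]
  have hsum3 : ∑ j ∈ Finset.range g, eF g (j * x) = if (g : ℤ) ∣ x then (g : ℂ) else 0 :=
    eF_orth hg0 x
  have hcond2 : (g : ℤ) ∣ x ↔ g ∣ Int.gcd x (d : ℤ) := by
    constructor
    · intro h
      have : (g : ℤ) ∣ ((Int.gcd x (d : ℤ) : ℕ) : ℤ) :=
        Int.dvd_coe_gcd h (dvd_trans hggθd hgθd)
      exact_mod_cast this
    · intro h
      have h1 : ((g : ℕ) : ℤ) ∣ ((Int.gcd x (d : ℤ) : ℕ) : ℤ) := by exact_mod_cast h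
      exact dvd_trans h1 (Int.gcd_dvd_left _ _)
  rw [hsum1, hsum2, hsum3]
  by_cases h : (g : ℤ) ∣ x
  · rw [if_pos h, if_pos (hcond2.mp h)]
    have hdne : (d : ℂ) ≠ 0 := Nat.cast_ne_zero.mpr (by omega)
    push_cast
    field_simp
  · rw [if_neg h, if_neg (fun hc => h (hcond2.mpr hc))]
    simp

theorem stmt_10 (q d : ℕ) (hq : 2 ≤ q) (hd : 2 ≤ d) (ψ θ x : ℤ) (hψ : ψ ≠ 0) :
    Tendsto
      (fun N : ℕ =>
        (((Finset.range N).filter fun n =>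
            (ψ * wq q n + θ * n + x) % (d : ℤ) = 0).card : ℝ) / N)
      atTop
      (nhds (if Int.gcd ψ (Int.gcd θ (d : ℤ)) ∣ Int.gcd x (d : ℤ) then
        (Int.gcd ψ (Int.gcd θ (d : ℤ)) : ℝ) / d else 0)) := by
  classical
  have hd0 : 0 < d := by omega
  set K : ℕ → ℕ := fun N => ((Finset.range N).filter fun n =>
      (ψ * wq q n + θ * n + x) % (d : ℤ) = 0).card with hK
  set V : ℝ := if Int.gcd ψ (Int.gcd θ (d : ℤ)) ∣ Int.gcd x (d : ℤ) then
      (Int.gcd ψ (Int.gcd θ (d : ℤ)) : ℝ) / d else 0 with hV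
  have hdC : (d : ℂ) ≠ 0 := Nat.cast_ne_zero.mpr (by omega)
  -- complex-valued convergence
  have hfun : ∀ N : ℕ, ((K N : ℂ) / (N : ℂ))
      = (1 / (d : ℂ)) * ∑ a ∈ Finset.range d,
          eF d (a * x) * (Sq q d (a * ψ) (a * θ) N / (N : ℂ)) := by
    intro N
    have h1 := count_eq q d hd0 ψ θ x N
    have h2 : (K N : ℂ) = (1 / (d : ℂ)) * ∑ a ∈ Finset.range d,
        eF d (a * x) * Sq q d (a * ψ) (a * θ) N := by
      rw [← h1, one_div, inv_mul_cancel_left₀ hdC]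
    rw [h2]
    rw [mul_div_assoc, Finset.sum_div]
    congr 1
    exact Finset.sum_congr rfl fun a _ => (mul_div_assoc _ _ _)
  have hlim : Tendsto (fun N : ℕ => (K N : ℂ) / (N : ℂ)) atTop
      (nhds ((1 / (d : ℂ)) * ∑ a ∈ Finset.range d,
        eF d (a * x) * (if ((d : ℤ) ∣ (a : ℤ) * ψ ∧ (d : ℤ) ∣ (a : ℤ) * θ)
          then (1 : ℂ) else 0))) := by
    simp only [hfun]
    apply Tendsto.const_mul
    apply tendsto_finset_sum
    intro a _
    apply Tendsto.const_mul
    by_cases h : ((d : ℤ) ∣ (a : ℤ) * ψ ∧ (d : ℤ) ∣ (a : ℤ) * θ)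
    · rw [if_pos h]
      exact Sq_tendsto_one q d hd0 _ _ h
    · rw [if_neg h]
      exact Sq_tendsto_zero' q d hq hd0 _ _ h
  rw [const_eval d hd ψ θ x hψ] at hlim
  have hre := (Complex.continuous_re.tendsto _).comp hlim
  have hfun2 : (fun N : ℕ => ((K N : ℂ) / (N : ℂ)).re) = fun N : ℕ => (K N : ℝ) / N := by
    funext N
    rw [show ((K N : ℕ) : ℂ) = (((K N : ℕ) : ℝ) : ℂ) by push_cast; rfl,
      show ((N : ℕ) : ℂ) = (((N : ℕ) : ℝ) : ℂ) by push_cast; rfl,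
      ← Complex.ofReal_div, Complex.ofReal_re]
  rw [Function.comp_def, hfun2, Complex.ofReal_re] at hre
  exact hre

end
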